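/- If a projection P on ℂ^{m+1} commutes with every matrix T satisfying T_{k,n} = 0 unless k − n = 1 (i.e., with all one-step forward shifts with arbitrary weights), then P is trivial: P = 0 or P = I. -/

import Mathlib

open Matrix

/-- If an orthogonal projection `P` on `ℂ^{m+1}` commutes with every
matrix `T` supported on the first subdiagonal (i.e. `T_{k,n} = 0` unless `k = n+1`),
then `P` is trivial: `P = 0` or `P = 1`. -/
theorem projection_commuting_with_subdiagonal_is_trivial
    (m : ℕ) (P : Matrix (Fin (m + 1)) (Fin (m + 1)) ℂ)
    (hP1 : P.IsHermitian) (hP2 : P * P = P)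
    (hcomm : ∀ T : Matrix (Fin (m + 1)) (Fin (m + 1)) ℂ,
      (∀ k n : Fin (m + 1), (k : ℕ) ≠ (n : ℕ) + 1 → T k n = 0) → P * T = T * P) :
    P = 0 ∨ P = 1 := by
  have key : ∀ (i : ℕ) (hi : i < m) (k n : Fin (m+1)),
      (if n = (⟨i, Nat.lt_succ_of_lt hi⟩ : Fin (m+1)) then P k ⟨i+1, Nat.succ_lt_succ hi⟩ else 0)
      = (if k = (⟨i+1, Nat.succ_lt_succ hi⟩ : Fin (m+1)) then P ⟨i, Nat.lt_succ_of_lt hi⟩ n else 0) := by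
    intro i hi k n
    have h := hcomm (Matrix.single ⟨i+1, Nat.succ_lt_succ hi⟩ ⟨i, Nat.lt_succ_of_lt hi⟩ 1) ?_
    · have h' := congrFun (congrFun h k) n
      simpa [mul_apply, Matrix.single, ite_and, Finset.sum_ite_eq, Finset.sum_ite_eq',
        eq_comm, mul_comm] using h'
    · intro a b hab
      simp only [Matrix.single, of_apply, ite_eq_right_iff, one_ne_zero]
      rintro ⟨rfl, rfl⟩
      exact absurd rfl hab
  -- column i+1 is zero off the diagonal
  have colzero : ∀ (i : ℕ) (hi : i < m) (k : Fin (m+1)),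
      k ≠ (⟨i+1, Nat.succ_lt_succ hi⟩ : Fin (m+1)) → P k ⟨i+1, Nat.succ_lt_succ hi⟩ = 0 := by
    intro i hi k hk
    have h := key i hi k ⟨i, Nat.lt_succ_of_lt hi⟩
    simpa [hk] using h
  -- row i is zero off the diagonal
  have rowzero : ∀ (i : ℕ) (hi : i < m) (n : Fin (m+1)),
      n ≠ (⟨i, Nat.lt_succ_of_lt hi⟩ : Fin (m+1)) → P ⟨i, Nat.lt_succ_of_lt hi⟩ n = 0 := by
    intro i hi n hn
    have h := key i hi ⟨i+1, Nat.succ_lt_succ hi⟩ n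
    simpa [hn] using h.symm
  -- consecutive diagonal entries are equal
  have diageq : ∀ (i : ℕ) (hi : i < m),
      P ⟨i+1, Nat.succ_lt_succ hi⟩ ⟨i+1, Nat.succ_lt_succ hi⟩
        = P ⟨i, Nat.lt_succ_of_lt hi⟩ ⟨i, Nat.lt_succ_of_lt hi⟩ := by
    intro i hi
    have h := key i hi ⟨i+1, Nat.succ_lt_succ hi⟩ ⟨i, Nat.lt_succ_of_lt hi⟩
    simpa using h
  -- all off-diagonal entries vanish
  have offdiag : ∀ k n : Fin (m+1), k ≠ n → P k n = 0 := by
    intro k n hkn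
    rcases Nat.eq_zero_or_pos (n : ℕ) with h0 | hpos
    · -- n = 0, so k ≠ 0 and m ≥ 1
      have hk0 : (k : ℕ) ≠ 0 := by
        intro hk
        exact hkn (Fin.ext (by omega))
      have hm : 0 < m := by
        have := k.isLt; omega
      have hn0 : n = (⟨0, Nat.lt_succ_of_lt hm⟩ : Fin (m+1)) := Fin.ext (by simp [h0])
      have hk' : k ≠ (⟨0, Nat.lt_succ_of_lt hm⟩ : Fin (m+1)) := by
        intro h; exact hk0 (by simpa using congrArg Fin.val h)
      have h1 : P ⟨0, Nat.lt_succ_of_lt hm⟩ k = 0 := rowzero 0 hm k hk'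
      have h2 := hP1.apply k (⟨0, Nat.lt_succ_of_lt hm⟩ : Fin (m+1))
      rw [hn0, ← h2, h1]
      simp
    · -- n = j + 1
      obtain ⟨j, hj⟩ : ∃ j, (n : ℕ) = j + 1 := ⟨(n:ℕ) - 1, by omega⟩
      have hjm : j < m := by have := n.isLt; omega
      have hn' : n = (⟨j+1, Nat.succ_lt_succ hjm⟩ : Fin (m+1)) := Fin.ext (by simp [hj])
      have hk' : k ≠ (⟨j+1, Nat.succ_lt_succ hjm⟩ : Fin (m+1)) := hn' ▸ hkn
      rw [hn']
      exact colzero j hjm k hk'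
  -- all diagonal entries equal P 0 0
  have diag : ∀ k : Fin (m+1), P k k = P 0 0 := by
    have aux : ∀ (j : ℕ) (hj : j < m + 1), P ⟨j, hj⟩ ⟨j, hj⟩ = P 0 0 := by
      intro j
      induction j with
      | zero => intro hj; rfl
      | succ i ih =>
        intro hj
        have hi : i < m := by omega
        have := diageq i hi
        rw [this]
        exact ih (Nat.lt_succ_of_lt hi)
    intro k
    have := aux (k : ℕ) k.isLt
    simpa using this
  set c : ℂ := P 0 0 with hc
  have hPc : P = c • (1 : Matrix (Fin (m+1)) (Fin (m+1)) ℂ) := by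
    ext k n
    by_cases h : k = n
    · subst h; simp [Matrix.one_apply, diag k]
    · simp [Matrix.one_apply, h, offdiag k n h]
  have hcc : c * c = c := by
    have := congrFun (congrFun (hPc ▸ hP2) 0) 0
    simpa [Matrix.mul_apply, Matrix.one_apply, smul_eq_mul] using this
  have hc01 : c = 0 ∨ c = 1 := by
    have : c * (c - 1) = 0 := by ring_nf; linear_combination hcc
    rcases mul_eq_zero.mp this with h | h
    · exact Or.inl h
    · exact Or.inr (sub_eq_zero.mp h)
  rcases hc01 with h | h
  · left; rw [hPc, h, zero_smul]
  · right; rw [hPc, h, one_smul]
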